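/- Let A be the operator of multiplication by a measurable function φ with 0 < m ≤ |φ| ≤ M on [0,1]. Then A is continuously invertible on L²([0,1]) with ‖A⁻¹‖ ≤ 1/m, and hence for any f₁,…,fₙ ∈ L²([0,1]), G(φf₁, …, φfₙ) ≥ m^{2n} G(f₁, …, fₙ). -/

import Mathlib

open MeasureTheory
open scoped RealInnerProductSpace
open Matrix

noncomputable abbrev L2unit : Type :=
  Lp ℝ 2 (volume.restrict (Set.Icc (0 : ℝ) 1))

open Matrix in

lemma psd_det_nonneg {n : Type*} [Fintype n] [DecidableEq n] {M : Matrix n n ℝ}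
    (h : M.PosSemidef) : 0 ≤ M.det := by
  rw [h.1.det_eq_prod_eigenvalues]
  exact Finset.prod_nonneg fun i _ => by exact_mod_cast h.eigenvalues_nonneg i

open Matrix in
lemma one_le_det_of_psd_sub_one {n : Type*} [Fintype n] [DecidableEq n] {M : Matrix n n ℝ}
    (h : (M - 1).PosSemidef) : 1 ≤ M.det := by
  have hM : M.IsHermitian := by simpa using h.1.add Matrix.isHermitian_one
  have heig : ∀ i, 1 ≤ hM.eigenvalues i := by
    intro i
    have hmv := hM.mulVec_eigenvectorBasis i
    have hq := h.dotProduct_mulVec_nonneg ⇑(hM.eigenvectorBasis i)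
    have hvne : (⇑(hM.eigenvectorBasis i) : n → ℝ) ≠ 0 := by
      intro h0
      have hn : ‖hM.eigenvectorBasis i‖ = 1 := hM.eigenvectorBasis.orthonormal.1 i
      have : ‖hM.eigenvectorBasis i‖ = 0 := by
        rw [EuclideanSpace.norm_eq]
        simp [show ∀ j, (hM.eigenvectorBasis i) j = 0 from fun j => congrFun h0 j]
      rw [this] at hn; norm_num at hn
    have hvpos : 0 < dotProduct (star ⇑(hM.eigenvectorBasis i)) ⇑(hM.eigenvectorBasis i) := by
      rcases lt_or_eq_of_le (dotProduct_star_self_nonneg ⇑(hM.eigenvectorBasis i)) with h' | h'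
      · exact h'
      · exact absurd (dotProduct_star_self_eq_zero.mp h'.symm) hvne
    rw [Matrix.sub_mulVec, hmv, Matrix.one_mulVec, dotProduct_sub,
      dotProduct_smul, smul_eq_mul] at hq
    nlinarith [hq, hvpos]
  rw [hM.det_eq_prod_eigenvalues]
  calc (1 : ℝ) = ∏ _i : n, 1 := by simp
  _ ≤ ∏ i, (hM.eigenvalues i : ℝ) := Finset.prod_le_prod (by simp) (by simpa using heig)

open Matrix MatrixOrder in
lemma det_le_det_psd {n : Type*} [Fintype n] [DecidableEq n] {X Y : Matrix n n ℝ}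
    (hY : Y.PosSemidef) (hXY : (X - Y).PosSemidef) : Y.det ≤ X.det := by
  have hX : X.PosSemidef := by simpa using hXY.add hY
  rcases eq_or_lt_of_le (psd_det_nonneg hY) with h0 | h0
  · rw [← h0]; exact psd_det_nonneg hX
  · set S := CFC.sqrt Y with hSdef
    have hS2 : S * S = Y := CFC.sqrt_mul_sqrt_self Y hY.nonneg
    have hdetS : S.det * S.det = Y.det := by rw [← Matrix.det_mul, hS2]
    have hSne : S.det ≠ 0 := by
      intro h; rw [h, mul_zero] at hdetS; rw [← hdetS] at h0; exact lt_irrefl _ h0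
    have hSunit : IsUnit S.det := isUnit_iff_ne_zero.mpr hSne
    have hSH : Sᴴ = S := (Matrix.nonneg_iff_posSemidef.mp (CFC.sqrt_nonneg Y)).1
    have hTH : (S⁻¹)ᴴ = S⁻¹ := by rw [Matrix.conjTranspose_nonsing_inv, hSH]
    have hTYT : S⁻¹ * Y * S⁻¹ = 1 := by
      rw [← hS2, ← Matrix.mul_assoc, Matrix.mul_assoc (S⁻¹ * S),
        Matrix.mul_nonsing_inv _ hSunit, Matrix.nonsing_inv_mul _ hSunit, Matrix.mul_one]
    have hZ1 : (S⁻¹ * X * S⁻¹ - 1).PosSemidef := by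
      have h' := hXY.mul_mul_conjTranspose_same S⁻¹
      rw [hTH, Matrix.mul_sub, Matrix.sub_mul, hTYT] at h'
      exact h'
    have h1 : 1 ≤ (S⁻¹ * X * S⁻¹).det := one_le_det_of_psd_sub_one hZ1
    have hdet : (S⁻¹ * X * S⁻¹).det = S.det⁻¹ * X.det * S.det⁻¹ := by
      rw [Matrix.det_mul, Matrix.det_mul, Matrix.det_nonsing_inv, Ring.inverse_eq_inv']
    rw [hdet] at h1
    calc Y.det = Y.det * 1 := by ring
    _ ≤ Y.det * (S.det⁻¹ * X.det * S.det⁻¹) := by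
        gcongr
    _ = X.det := by rw [← hdetS]; field_simp

lemma gram_quadratic {n : ℕ} (f : Fin n → L2unit) (c : Fin n → ℝ) :
    dotProduct (star c) ((Matrix.of fun i j => ⟪f i, f j⟫) *ᵥ c)
      = ⟪∑ i, c i • f i, ∑ j, c j • f j⟫ := by
  simp only [dotProduct, Matrix.mulVec, Matrix.of_apply, Pi.star_apply, star_trivial,
    sum_inner, inner_sum, real_inner_smul_left, real_inner_smul_right, Finset.mul_sum]
  exact Finset.sum_congr rfl fun i _ => Finset.sum_congr rfl fun j _ => by rw [real_inner_comm (f j) (f i)]; ring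

lemma gram_hermitian {n : ℕ} (f : Fin n → L2unit) :
    (Matrix.of fun i j => ⟪f i, f j⟫ : Matrix (Fin n) (Fin n) ℝ).IsHermitian := by
  ext i j
  simp [Matrix.conjTranspose_apply, real_inner_comm]


/-- The operator `A` of multiplication by a measurable `φ` with `0 < m ≤ |φ| ≤ M` is
continuously invertible on `L²([0,1])` with `‖A⁻¹‖ ≤ 1/m`, and hence
`G(φf₁,…,φfₙ) ≥ m^{2n} G(f₁,…,fₙ)` for all `f₁,…,fₙ ∈ L²([0,1])`. -/
theorem multiplication_operator_invertible_gram (φ : ℝ → ℝ) (hφ : Measurable φ)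
    {m M : ℝ} (hm : 0 < m) (hbound : ∀ r, m ≤ |φ r| ∧ |φ r| ≤ M)
    (A : L2unit →L[ℝ] L2unit)
    (hA : ∀ f : L2unit, (A f : ℝ → ℝ) =ᵐ[volume.restrict (Set.Icc (0 : ℝ) 1)]
      fun r => φ r * f r) :
    (∃ B : L2unit →L[ℝ] L2unit,
        B.comp A = ContinuousLinearMap.id ℝ L2unit ∧
        A.comp B = ContinuousLinearMap.id ℝ L2unit ∧ ‖B‖ ≤ 1 / m) ∧
      ∀ (n : ℕ) (f : Fin n → L2unit),
        Matrix.det (Matrix.of fun i j => ⟪A (f i), A (f j)⟫) ≥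
          m ^ (2 * n) * Matrix.det (Matrix.of fun i j => ⟪f i, f j⟫) := by
  have hφne : ∀ r, φ r ≠ 0 := by
    intro r h
    have := (hbound r).1
    rw [h, abs_zero] at this
    linarith
  -- lower bound
  have hAlow : ∀ f : L2unit, m * ‖f‖ ≤ ‖A f‖ := by
    intro f
    have h1 : ‖(m • f : L2unit)‖ ≤ ‖A f‖ := by
      apply Lp.norm_le_norm_of_ae_le
      filter_upwards [Lp.coeFn_smul m f, hA f] with r h1 h2
      rw [h1, h2]
      simp only [Pi.smul_apply, smul_eq_mul, Real.norm_eq_abs, abs_mul]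
      exact mul_le_mul_of_nonneg_right (by rw [abs_of_pos hm]; exact (hbound r).1)
        (abs_nonneg _)
    rwa [norm_smul, Real.norm_eq_abs, abs_of_pos hm] at h1
  have hker : LinearMap.ker (A : L2unit →ₗ[ℝ] L2unit) = ⊥ := by
    rw [LinearMap.ker_eq_bot']
    intro f hf
    have : A f = 0 := hf
    have h2 := hAlow f
    rw [this, norm_zero] at h2
    have : ‖f‖ = 0 := le_antisymm (by nlinarith) (norm_nonneg f)
    exact norm_eq_zero.mp this
  have hsurj : LinearMap.range (A : L2unit →ₗ[ℝ] L2unit) = ⊤ := by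
    rw [LinearMap.range_eq_top]
    intro g
    have hg := Lp.memLp g
    have hmem : MemLp (fun r => (φ r)⁻¹ * (g : ℝ → ℝ) r) 2
        (volume.restrict (Set.Icc (0 : ℝ) 1)) := by
      apply MemLp.of_le (hg.const_mul m⁻¹)
      · exact (hφ.inv.aestronglyMeasurable).mul (Lp.aestronglyMeasurable g)
      · refine Filter.Eventually.of_forall fun r => ?_
        simp only [Real.norm_eq_abs, abs_mul, abs_inv]
        refine mul_le_mul_of_nonneg_right ?_ (abs_nonneg _)
        rw [abs_of_pos hm]
        exact inv_anti₀ hm (hbound r).1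
    refine ⟨hmem.toLp _, ?_⟩
    apply Lp.ext
    filter_upwards [hA (hmem.toLp _), hmem.coeFn_toLp] with r h1 h2
    show (A (hmem.toLp _) : ℝ → ℝ) r = (g : ℝ → ℝ) r
    rw [h1, h2, ← mul_assoc, mul_inv_cancel₀ (hφne r), one_mul]
  set e := ContinuousLinearEquiv.ofBijective A hker hsurj with he
  have heA : ∀ x, e x = A x := fun x =>
    congrFun (ContinuousLinearEquiv.coeFn_ofBijective A hker hsurj) x
  constructor
  · refine ⟨e.symm.toContinuousLinearMap, ?_, ?_, ?_⟩
    · refine ContinuousLinearMap.ext fun x => ?_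
      exact ContinuousLinearEquiv.ofBijective_symm_apply_apply A hker hsurj x
    · refine ContinuousLinearMap.ext fun x => ?_
      exact ContinuousLinearEquiv.ofBijective_apply_symm_apply A hker hsurj x
    · refine ContinuousLinearMap.opNorm_le_bound _ (by positivity) fun g => ?_
      have h1 := hAlow (e.symm g)
      have h2 : A (e.symm g) = g := ContinuousLinearEquiv.ofBijective_apply_symm_apply A hker hsurj g
      rw [h2] at h1
      have : ‖e.symm g‖ ≤ ‖g‖ / m := (le_div_iff₀' hm).mpr h1
      calc ‖e.symm.toContinuousLinearMap g‖ = ‖e.symm g‖ := rfl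
      _ ≤ ‖g‖ / m := this
      _ = 1 / m * ‖g‖ := by ring
  · intro n f
    set G : Matrix (Fin n) (Fin n) ℝ := Matrix.of fun i j => ⟪f i, f j⟫ with hG
    set X : Matrix (Fin n) (Fin n) ℝ := Matrix.of fun i j => ⟪A (f i), A (f j)⟫ with hX
    set Y : Matrix (Fin n) (Fin n) ℝ := (m ^ 2) • G with hYdef
    have hqY : ∀ c : Fin n → ℝ, dotProduct (star c) (Y *ᵥ c)
        = m ^ 2 * ⟪∑ i, c i • f i, ∑ j, c j • f j⟫ := by
      intro c
      rw [hYdef, Matrix.smul_mulVec, dotProduct_smul, smul_eq_mul, gram_quadratic]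
    have hqX : ∀ c : Fin n → ℝ, dotProduct (star c) (X *ᵥ c)
        = ⟪A (∑ i, c i • f i), A (∑ j, c j • f j)⟫ := by
      intro c
      rw [hX, gram_quadratic (fun i => A (f i)) c]
      simp only [← _root_.map_smul, ← map_sum]
    have hYH : Y.IsHermitian := by
      show Yᴴ = Y
      rw [hYdef, Matrix.conjTranspose_smul, (gram_hermitian f).eq, star_trivial]
    have hY : Y.PosSemidef := by
      refine Matrix.PosSemidef.of_dotProduct_mulVec_nonneg hYH fun c => ?_
      rw [hqY c, real_inner_self_eq_norm_sq]
      positivity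
    have hXY : (X - Y).PosSemidef := by
      refine Matrix.PosSemidef.of_dotProduct_mulVec_nonneg ((gram_hermitian fun i => A (f i)).sub hYH) fun c => ?_
      rw [Matrix.sub_mulVec, dotProduct_sub, hqX c, hqY c]
      set s := ∑ i, c i • f i
      rw [real_inner_self_eq_norm_sq, real_inner_self_eq_norm_sq]
      nlinarith [hAlow s, norm_nonneg s, norm_nonneg (A s), mul_self_le_mul_self (by positivity : (0:ℝ) ≤ m * ‖s‖) (hAlow s)]
    have hdet := det_le_det_psd hY hXY
    have : Y.det = m ^ (2 * n) * G.det := by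
      rw [hYdef, Matrix.det_smul]
      simp [← pow_mul]
    rw [this] at hdet
    exact hdet
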